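/- The matrix A_{n,k} = k·χ_n(k)/n (for 0 ≤ k ≤ n, and 0 otherwise) satisfies the three Toeplitz–Schur regularity conditions: (1) ∑_k |A_{n,k}| is uniformly bounded in n; (2) for each fixed k, A_{n,k} → 0 as n → ∞; (3) ∑_k A_{n,k} → 1 as n → ∞. -/

import Mathlib

noncomputable def chi (n k : ℕ) : ℝ := ∏ j ∈ Finset.range k, (1 - (j : ℝ) / n)

noncomputable def A (n k : ℕ) : ℝ := if k ≤ n then (k : ℝ) * chi n k / n else 0

lemma chi_nonneg {n k : ℕ} (h : k ≤ n) : 0 ≤ chi n k := by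
  apply Finset.prod_nonneg
  intro j hj
  rw [Finset.mem_range] at hj
  have hjn : (j : ℝ) < n := by exact_mod_cast lt_of_lt_of_le hj h
  have hn : (0:ℝ) < n := lt_of_le_of_lt (Nat.cast_nonneg j) hjn
  have : (j : ℝ) / n < 1 := (div_lt_one hn).mpr hjn
  linarith

lemma chi_le_one {n k : ℕ} (h : k ≤ n) : chi n k ≤ 1 := by
  apply Finset.prod_le_one
  · intro j hj
    rw [Finset.mem_range] at hj
    have hjn : (j : ℝ) < n := by exact_mod_cast lt_of_lt_of_le hj h
    have hn : (0:ℝ) < n := lt_of_le_of_lt (Nat.cast_nonneg j) hjn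
    have : (j : ℝ) / n < 1 := (div_lt_one hn).mpr hjn
    linarith
  · intro j _
    have : (0:ℝ) ≤ (j : ℝ) / n := div_nonneg (Nat.cast_nonneg j) (Nat.cast_nonneg n)
    linarith

lemma A_nonneg (n k : ℕ) : 0 ≤ A n k := by
  unfold A
  split
  · next h =>
    exact div_nonneg (mul_nonneg (Nat.cast_nonneg k) (chi_nonneg h)) (Nat.cast_nonneg n)
  · exact le_refl 0

lemma A_eq_sub {n k : ℕ} (hn : 1 ≤ n) (h : k ≤ n) :
    A n k = chi n k - chi n (k + 1) := by
  have hn0 : (n : ℝ) ≠ 0 := by positivity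
  rw [A, if_pos h, chi, chi, Finset.prod_range_succ]
  show (k : ℝ) * (∏ j ∈ Finset.range k, (1 - (j:ℝ)/n)) / n = _
  field_simp
  ring

lemma sum_A (n : ℕ) (hn : 1 ≤ n) : ∑ k ∈ Finset.range (n + 1), A n k = 1 := by
  have : ∑ k ∈ Finset.range (n + 1), A n k
      = ∑ k ∈ Finset.range (n + 1), (chi n k - chi n (k + 1)) := by
    apply Finset.sum_congr rfl
    intro k hk
    rw [Finset.mem_range] at hk
    exact A_eq_sub hn (Nat.lt_succ_iff.mp hk)
  rw [this, Finset.sum_range_sub' (fun k => chi n k)]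
  have h0 : chi n 0 = 1 := by simp [chi]
  have h1 : chi n (n + 1) = 0 := by
    apply Finset.prod_eq_zero (Finset.self_mem_range_succ n)
    have hn0 : (n : ℝ) ≠ 0 := by positivity
    field_simp
    norm_num
  rw [h0, h1, sub_zero]

lemma A_abs_le (n k : ℕ) : |A n k| ≤ (k : ℝ) / n := by
  rw [abs_of_nonneg (A_nonneg n k)]
  unfold A
  split
  · next h =>
    rcases Nat.eq_zero_or_pos n with hn | hn
    · subst hn
      interval_cases k
      simp
    · have hn' : (0:ℝ) < n := by exact_mod_cast hn
      rw [div_le_div_iff_of_pos_right hn']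
      calc (k : ℝ) * chi n k ≤ (k : ℝ) * 1 :=
        mul_le_mul_of_nonneg_left (chi_le_one h) (Nat.cast_nonneg k)
      _ = k := mul_one _
  · positivity

theorem chi_toeplitz_schur :
    (∃ H : ℝ, ∀ n : ℕ, 1 ≤ n → ∑ k ∈ Finset.range (n + 1), |A n k| ≤ H) ∧
    (∀ k : ℕ, Filter.Tendsto (fun n : ℕ => A n k) Filter.atTop (nhds 0)) ∧
    Filter.Tendsto (fun n : ℕ => ∑ k ∈ Finset.range (n + 1), A n k)
      Filter.atTop (nhds 1) := by
  refine ⟨⟨1, fun n hn => ?_⟩, fun k => ?_, ?_⟩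
  · have : ∑ k ∈ Finset.range (n + 1), |A n k| = ∑ k ∈ Finset.range (n + 1), A n k := by
      exact Finset.sum_congr rfl fun k _ => abs_of_nonneg (A_nonneg n k)
    rw [this, sum_A n hn]
  · apply squeeze_zero_norm (fun n => by simpa using A_abs_le n k)
    exact tendsto_const_div_atTop_nhds_zero_nat (k : ℝ)
  · apply Filter.Tendsto.congr' _ tendsto_const_nhds
    filter_upwards [Filter.eventually_ge_atTop 1] with n hn
    exact (sum_A n hn).symm
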